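/- Let c be a consistent map and μ the induced charge on the ring R of compact open subsets of Y. For every α in the group of algebraic numbers modulo roots of unity, the function f_α(y) = log‖α‖_y has support in R, is a simple function with respect to R (constant on the sets Y(K,v) for any number field K containing a representative of α), and its integral equals Φ_c(α) = Σ_{v ∈ M_K} c(K,v) log‖α‖_v. -/

import Mathlib

/-- Abstract axiomatization of the space `Y` of all places of `\overline{ℚ}`: a directed
system `F` of number fields (ordered by field extension `le`), the places `Pl K` of each
number field, the map `over` sending a place `w` of `L` to the place of `K` it divides, and
the basic compact open sets `Y(K,v) = {y ∈ Y : y ∣ v}` forming a basis of the totally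
disconnected Hausdorff topology on `Y`. -/
structure PlaceSystem where
  /-- the number fields -/
  F : Type
  /-- `le K L` means `L/K` is a (finite) field extension -/
  le : F → F → Prop
  le_refl : ∀ K, le K K
  /-- any two number fields admit a compositum -/
  directed : ∀ K L, ∃ M, le K M ∧ le L M
  /-- the places of a number field -/
  Pl : F → Type
  /-- `over h w` is the unique place of `K` divided by the place `w` of `L` -/
  overPl : ∀ {K L : F}, le K L → Pl L → Pl K
  /-- only finitely many places of `L` divide a given place of `K` -/
  finiteFibers : ∀ {K L : F} (h : le K L) (v : Pl K), {w : Pl L | overPl h w = v}.Finite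
  /-- the set of places of `\overline{ℚ}` -/
  Y : Type
  top : TopologicalSpace Y
  t2 : @T2Space Y top
  /-- the basic set `Y(K,v)` of places of `\overline{ℚ}` dividing `v` -/
  Yset : (K : F) → Pl K → Set Y
  Yset_nonempty : ∀ (K : F) (v : Pl K), (Yset K v).Nonempty
  Yset_compact : ∀ (K : F) (v : Pl K), @IsCompact Y top (Yset K v)
  Yset_open : ∀ (K : F) (v : Pl K), @IsOpen Y top (Yset K v)
  Yset_disjoint : ∀ (K : F) (v w : Pl K), v ≠ w → Disjoint (Yset K v) (Yset K w)
  /-- `Y(K,v)` is the disjoint union of the `Y(L,w)` over the places `w ∣ v` of `L` -/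
  Yset_decomp : ∀ {K L : F} (h : le K L) (v : Pl K),
    Yset K v = ⋃ w ∈ {w : Pl L | overPl h w = v}, Yset L w
  basis : @TopologicalSpace.IsTopologicalBasis Y top
    {A : Set Y | ∃ (K : F) (v : Pl K), A = Yset K v}
  cover : (⋃ (K : F) (v : Pl K), Yset K v) = Set.univ
  noncompact : ¬ @IsCompact Y top Set.univ

/-- A map `c` on pairs `(K,v)` is consistent if `c(K,v) = Σ_{w ∣ v} c(L,w)` for every finite
extension `L/K`. -/
def PlaceSystem.Consistent (S : PlaceSystem) (c : ∀ K : S.F, S.Pl K → ℝ) : Prop :=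
  ∀ {K L : S.F} (h : S.le K L) (v : S.Pl K),
    c K v = ∑ᶠ (w : S.Pl L) (_ : S.overPl h w = v), c L w

/-- `R`, the smallest ring of sets on `Y` containing all the basic sets `Y(K,v)`. -/
def PlaceSystem.ringR (S : PlaceSystem) : Set (Set S.Y) :=
  ⋂₀ {R : Set (Set S.Y) |
    MeasureTheory.IsSetRing R ∧ ∀ (K : S.F) (v : S.Pl K), S.Yset K v ∈ R}

/-- A charge on `R`: a finitely additive real-valued set function vanishing on `∅`. -/
def PlaceSystem.IsCharge (S : PlaceSystem) (μ : Set S.Y → ℝ) : Prop :=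
  μ ∅ = 0 ∧ ∀ A ∈ S.ringR, ∀ B ∈ S.ringR, Disjoint A B → μ (A ∪ B) = μ A + μ B

/-- Let `c` be a consistent map and `μ` the induced charge on `R` (with `μ(Y(K,v)) = c(K,v)`).
Let `α` be an algebraic number modulo roots of unity, `K` a number field containing a
representative of `α`, and `f = f_α : Y → ℝ`, `f(y) = log‖α‖_y`, which is constant equal to
`val v = log‖α‖_v` on each basic set `Y(K,v)`, is supported in `⋃_v Y(K,v)` and vanishes on
all but finitely many of them.  Then the support of `f` belongs to `R`, the integral of the
`R`-simple function `f` against `μ`, namely `Σ_v μ(Y(K,v))·val v`, equals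
`Φ_c(α) = Σ_{v ∈ M_K} c(K,v)·log‖α‖_v`, and this quantity does not depend on the chosen
number field `K`. -/
theorem stmt_17 (S : PlaceSystem) (c : ∀ K : S.F, S.Pl K → ℝ) (hc : S.Consistent c)
    (μ : Set S.Y → ℝ) (hμ : S.IsCharge μ)
    (hμc : ∀ (K : S.F) (v : S.Pl K), μ (S.Yset K v) = c K v)
    (f : S.Y → ℝ) (K : S.F) (val : S.Pl K → ℝ)
    (hval : ∀ v : S.Pl K, ∀ y ∈ S.Yset K v, f y = val v)
    (hsupp : ∀ y : S.Y, f y ≠ 0 → ∃ v : S.Pl K, y ∈ S.Yset K v)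
    (hfin : {v : S.Pl K | val v ≠ 0}.Finite) :
    Function.support f ∈ S.ringR ∧
    (∑ᶠ v : S.Pl K, μ (S.Yset K v) * val v) = ∑ᶠ v : S.Pl K, c K v * val v ∧
    (∀ (L : S.F) (h : S.le K L) (valL : S.Pl L → ℝ),
      (∀ w : S.Pl L, ∀ y ∈ S.Yset L w, f y = valL w) →
      (∑ᶠ v : S.Pl K, c K v * val v) = ∑ᶠ w : S.Pl L, c L w * valL w) := by
  classical
  refine ⟨?_, ?_, ?_⟩
  · -- support of f belongs to R
    have hsub : Function.support f = ⋃ v ∈ hfin.toFinset, S.Yset K v := by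
      ext y
      simp only [Function.mem_support, Set.mem_iUnion, Set.Finite.mem_toFinset,
        Set.mem_setOf_eq]
      constructor
      · intro hy
        obtain ⟨v, hv⟩ := hsupp y hy
        exact ⟨v, by rw [← hval v y hv]; exact hy, hv⟩
      · rintro ⟨v, hv0, hv⟩
        rw [hval v y hv]; exact hv0
    rw [hsub]
    intro R hR
    simp only [Set.mem_setOf_eq] at hR
    exact hR.1.biUnion_mem _ (fun v _ => hR.2 K v)
  · exact finsum_congr fun v => by rw [hμc]
  · intro L h valL hvalL
    have hLK : ∀ w : S.Pl L, valL w = val (S.overPl h w) := by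
      intro w
      obtain ⟨y, hy⟩ := S.Yset_nonempty L w
      have hy' : y ∈ S.Yset K (S.overPl h w) := by
        rw [S.Yset_decomp h]
        exact Set.mem_biUnion rfl hy
      rw [← hvalL w y hy, hval _ y hy']
    set T : Finset (S.Pl K) := hfin.toFinset with hT
    have hW : {w : S.Pl L | S.overPl h w ∈ T}.Finite := by
      have he : {w : S.Pl L | S.overPl h w ∈ T} = ⋃ v ∈ T, {w | S.overPl h w = v} := by
        ext w; simp
      rw [he]
      exact T.finite_toSet.biUnion (fun v _ => S.finiteFibers h v)
    have h1 : (∑ᶠ v, c K v * val v) = ∑ v ∈ T, c K v * val v := by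
      refine finsum_eq_sum_of_support_subset _ fun v hv => ?_
      have : val v ≠ 0 := fun h0 => hv (by simp [h0])
      simpa [hT] using this
    have h2 : (∑ᶠ w, c L w * valL w) = ∑ w ∈ hW.toFinset, c L w * valL w := by
      refine finsum_eq_sum_of_support_subset _ fun w hw => ?_
      have : valL w ≠ 0 := fun h0 => hw (by simp [h0])
      rw [hLK w] at this
      simpa [hT] using this
    rw [h1, h2, ← Finset.sum_fiberwise_of_maps_to
      (g := fun w => S.overPl h w) (t := T)
      (fun w hw => by simpa using (hW.mem_toFinset.mp hw)) (fun w => c L w * valL w)]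
    refine Finset.sum_congr rfl fun v hv => ?_
    have hfib : {w : S.Pl L | S.overPl h w = v}
        = ↑(hW.toFinset.filter (fun w => S.overPl h w = v)) := by
      ext w
      simp only [Set.mem_setOf_eq, Finset.coe_filter, Set.Finite.mem_toFinset]
      constructor
      · intro hw; exact ⟨by rw [hw]; exact hv, hw⟩
      · exact fun hw => hw.2
    have hcv : c K v = ∑ w ∈ hW.toFinset.filter (fun w => S.overPl h w = v), c L w := by
      rw [hc h v]
      have : (∑ᶠ (w : S.Pl L) (_ : S.overPl h w = v), c L w)
          = ∑ᶠ w ∈ {w : S.Pl L | S.overPl h w = v}, c L w := rfl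
      rw [this, hfib, finsum_mem_coe_finset]
    rw [hcv, Finset.sum_mul]
    refine Finset.sum_congr rfl fun w hw => ?_
    have := (Finset.mem_filter.mp hw).2
    rw [hLK w, this]
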